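/- Let k ≥ 1 and let σ_k be the morphism on {1,2} defined by σ_k(1) = 1·(1^{k-1}2)^k·1^k and σ_k(2) = 1·(1^{k-1}2)^{2k+1}·1^k, and let τ_k be the morphism with τ_k(1) = 1^{k-1}2 and τ_k(2) = 1^{k-1}2·1^{k+1}. Then the iterative fixed point of σ_k starting from 1 equals 1 concatenated with the iterative fixed point of τ_k starting from 1: σ_k^∞(1) = 1 · τ_k^∞(1). -/

import Mathlib

/-- The morphism `τ_k : 1 ↦ 1^{k-1}2, 2 ↦ 1^{k-1}2·1^{k+1}`. -/
def tauk (k : ℕ) : List ℕ → List ℕ := fun w =>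
  w.flatMap fun c =>
    if c = 1 then List.replicate (k - 1) 1 ++ [2]
    else List.replicate (k - 1) 1 ++ [2] ++ List.replicate (k + 1) 1

/-- The morphism `σ_k : 1 ↦ 1(1^{k-1}2)^k 1^k, 2 ↦ 1(1^{k-1}2)^{2k+1} 1^k`. -/
def sigk (k : ℕ) : List ℕ → List ℕ := fun w =>
  w.flatMap fun c =>
    if c = 1 then
      [1] ++ (List.replicate k (List.replicate (k - 1) 1 ++ [2])).flatten ++ List.replicate k 1
    else
      [1] ++ (List.replicate (2 * k + 1) (List.replicate (k - 1) 1 ++ [2])).flatten ++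
        List.replicate k 1

/-- `f` is the iterative fixed point of the morphism `φ` starting from the letter `a`:
it agrees with every iterate `φ^m(a)`, `m ≥ 1`. -/
def IsIterFixedPoint (phi : List ℕ → List ℕ) (a : ℕ) (f : ℕ → ℕ) : Prop :=
  ∀ m, 1 ≤ m → ∀ i, i < (phi^[m] [a]).length → f i = (phi^[m] [a]).getD i 0

/-! ### Auxiliary definitions -/

/-- The block `B = 1^{k-1} 2`. -/
def Bw (k : ℕ) : List ℕ := List.replicate (k - 1) 1 ++ [2]

/-- `B^n` as a flattened list. -/
def Bp (k n : ℕ) : List ℕ := (List.replicate n (Bw k)).flatten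

/-- The auxiliary morphism `ρ_k : 1 ↦ B^k 1^{k+1}, 2 ↦ B^{2k+1} 1^{k+1}`. -/
def rhok (k : ℕ) : List ℕ → List ℕ := fun w =>
  w.flatMap fun c =>
    if c = 1 then Bp k k ++ List.replicate (k + 1) 1
    else Bp k (2 * k + 1) ++ List.replicate (k + 1) 1

lemma Bp_add (k a b : ℕ) : Bp k (a + b) = Bp k a ++ Bp k b := by
  rw [Bp, List.replicate_add, List.flatten_append]; rfl

lemma Bp_one (k : ℕ) : Bp k 1 = Bw k := by simp [Bp]

/-- Morphisms defined via flatMap distribute over append. -/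
lemma flatMap_append' (f : ℕ → List ℕ) (a b : List ℕ) :
    (a ++ b).flatMap f = a.flatMap f ++ b.flatMap f := List.flatMap_append ..

lemma tauk_append (k : ℕ) (a b : List ℕ) : tauk k (a ++ b) = tauk k a ++ tauk k b :=
  flatMap_append' ..

lemma sigk_append (k : ℕ) (a b : List ℕ) : sigk k (a ++ b) = sigk k a ++ sigk k b :=
  flatMap_append' ..

lemma rhok_append (k : ℕ) (a b : List ℕ) : rhok k (a ++ b) = rhok k a ++ rhok k b :=
  flatMap_append' ..

lemma tauk_ones (k n : ℕ) : tauk k (List.replicate n 1) = Bp k n := by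
  induction n with
  | zero => rfl
  | succ n ih =>
    rw [List.replicate_succ, show Bp k (n + 1) = Bp k (1 + n) by rw [Nat.add_comm],
      Bp_add, Bp_one]
    have hstep : tauk k (1 :: List.replicate n 1) = Bw k ++ tauk k (List.replicate n 1) := by
      simp [tauk, Bw]
    rw [hstep, ih]

lemma tauk_one (k : ℕ) : tauk k [1] = Bw k := by simp [tauk, Bw]

lemma tauk_Bw (k : ℕ) (hk : 1 ≤ k) : tauk k (Bw k) = Bp k k ++ List.replicate (k + 1) 1 := by
  rw [Bw, tauk_append]
  rw [tauk_ones]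
  have h2 : tauk k [2] = Bw k ++ List.replicate (k + 1) 1 := by simp [tauk, Bw]
  rw [h2, show k = (k - 1) + 1 by omega, Bp_add, Bp_one, List.append_assoc]
  rw [show k - 1 + 1 - 1 = k - 1 by omega]

/-- `v = τ_k²(1)`. -/
def vk (k : ℕ) : List ℕ := Bp k k ++ List.replicate (k + 1) 1

lemma tau2_one (k : ℕ) (hk : 1 ≤ k) : tauk k (tauk k [1]) = vk k := by
  rw [tauk_one, tauk_Bw k hk]; rfl

lemma tau2_two (k c : ℕ) (hk : 1 ≤ k) (hc : ¬ c = 1) :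
    tauk k (tauk k [c]) = vk k ++ Bp k (k + 1) := by
  have h2 : tauk k [c] = Bw k ++ List.replicate (k + 1) 1 := by simp [tauk, Bw, hc]
  rw [h2, tauk_append, tauk_Bw k hk, tauk_ones]; rfl

/-- Per-letter conjugacy (A): `σ(c) ++ [1] = [1] ++ ρ(c)`. -/
lemma conjA_letter (k c : ℕ) : sigk k [c] ++ [1] = [1] ++ rhok k [c] := by
  by_cases hc : c = 1 <;>
    simp [sigk, rhok, hc, Bp, Bw, List.append_assoc, ← List.replicate_succ' (n := k) (a := (1:ℕ))]

/-- Per-letter conjugacy (B): `τ²(c) ++ v = v ++ ρ(c)`. -/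
lemma conjB_letter (k c : ℕ) (hk : 1 ≤ k) :
    tauk k (tauk k [c]) ++ vk k = vk k ++ rhok k [c] := by
  by_cases hc : c = 1
  · subst hc
    rw [tau2_one k hk]
    have : rhok k [1] = vk k := by simp [rhok, vk]
    rw [this]
  · rw [tau2_two k c hk hc]
    have : rhok k [c] = Bp k (2 * k + 1) ++ List.replicate (k + 1) 1 := by simp [rhok, hc]
    have hB : Bp k (k + 1) ++ Bp k k = Bp k (2 * k + 1) := by
      rw [← Bp_add]; congr 1; omega
    calc (vk k ++ Bp k (k + 1)) ++ vk k
        = vk k ++ ((Bp k (k + 1) ++ Bp k k) ++ List.replicate (k + 1) 1) := by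
          simp [vk, List.append_assoc]
      _ = vk k ++ (Bp k (2 * k + 1) ++ List.replicate (k + 1) 1) := by rw [hB]
      _ = vk k ++ rhok k [c] := by rw [this]

/-- Extension of a per-letter conjugacy to words. -/
lemma conj_ext (f g : List ℕ → List ℕ) (u : List ℕ)
    (hf : ∀ a b, f (a ++ b) = f a ++ f b) (hg : ∀ a b, g (a ++ b) = g a ++ g b)
    (h : ∀ c, f [c] ++ u = u ++ g [c]) (w : List ℕ) (hw : f [] = []) (hw' : g [] = []) :
    f w ++ u = u ++ g w := by
  induction w with
  | nil => rw [hw, hw', List.nil_append, List.append_nil]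
  | cons c w ih =>
    have : (c :: w) = [c] ++ w := rfl
    rw [this, hf, hg, List.append_assoc, ih, ← List.append_assoc, h c, List.append_assoc]

lemma conjA (k : ℕ) (w : List ℕ) : sigk k w ++ [1] = [1] ++ rhok k w :=
  conj_ext _ _ _ (sigk_append k) (rhok_append k) (conjA_letter k) w rfl rfl

lemma conjB (k : ℕ) (hk : 1 ≤ k) (w : List ℕ) :
    tauk k (tauk k w) ++ vk k = vk k ++ rhok k w := by
  refine conj_ext (fun w => tauk k (tauk k w)) _ _ ?_ (rhok_append k)
    (fun c => conjB_letter k c hk) w rfl rfl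
  intro a b
  show tauk k (tauk k (a ++ b)) = tauk k (tauk k a) ++ tauk k (tauk k b)
  rw [tauk_append, tauk_append]

/-- Main identity: `σ^m([1]) ++ [1] = [1] ++ τ^{2m}([1])`. -/
lemma main_identity (k : ℕ) (hk : 1 ≤ k) (m : ℕ) :
    (sigk k)^[m] [1] ++ [1] = [1] ++ (tauk k)^[2 * m] [1] := by
  induction m with
  | zero => rfl
  | succ m ih =>
    have h2m : 2 * (m + 1) = (2 * m + 1) + 1 := by ring
    rw [h2m, Function.iterate_succ_apply', Function.iterate_succ_apply',
      Function.iterate_succ_apply']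
    -- goal: sigk k ((sigk k)^[m] [1]) ++ [1] = [1] ++ tauk k (tauk k ((tauk k)^[2*m] [1]))
    have happly := congrArg (fun w => tauk k (tauk k w)) ih
    simp only [tauk_append] at happly
    -- happly : τ²(σ^m[1]) ++ τ²([1]) = τ²([1]) ++ τ²(τ^{2m}[1])
    have hv : tauk k (tauk k [1]) = vk k := tau2_one k hk
    rw [hv] at happly
    have hB := conjB k hk ((sigk k)^[m] [1])
    have : vk k ++ rhok k ((sigk k)^[m] [1]) =
        vk k ++ tauk k (tauk k ((tauk k)^[2 * m] [1])) := by
      rw [← hB, happly]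
    have hcancel := List.append_cancel_left this
    rw [conjA k ((sigk k)^[m] [1]), hcancel]

lemma sigk_len (k : ℕ) (hk : 1 ≤ k) (w : List ℕ) :
    2 * w.length ≤ (sigk k w).length := by
  induction w with
  | nil => simp [sigk]
  | cons c w ih =>
    have : sigk k (c :: w) = sigk k [c] ++ sigk k w := sigk_append k [c] w
    rw [this, List.length_append, List.length_cons]
    have hc : 2 ≤ (sigk k [c]).length := by
      by_cases h : c = 1 <;> simp [sigk, h] <;> omega
    omega

lemma sigk_iter_len (k : ℕ) (hk : 1 ≤ k) (m : ℕ) :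
    m + 1 ≤ ((sigk k)^[m] [1]).length := by
  induction m with
  | zero => simp
  | succ m ih =>
    rw [Function.iterate_succ_apply']
    have := sigk_len k hk ((sigk k)^[m] [1])
    omega

theorem stmt_15 (k : ℕ) (hk : 1 ≤ k) (s t : ℕ → ℕ)
    (hs : IsIterFixedPoint (sigk k) 1 s) (ht : IsIterFixedPoint (tauk k) 1 t) :
    s 0 = 1 ∧ ∀ n, s (n + 1) = t n := by
  constructor
  · have h1 : (0:ℕ) < ((sigk k)^[1] [1]).length := by
      have := sigk_iter_len k hk 1; omega
    have := hs 1 le_rfl 0 h1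
    rw [this]
    simp [sigk]
  · intro n
    set m := n + 2 with hm
    have hlen : n + 2 ≤ ((sigk k)^[m] [1]).length := by
      have := sigk_iter_len k hk m; omega
    have hid := main_identity k hk m
    have hlen2 := congrArg List.length hid
    rw [List.length_append, List.length_append] at hlen2
    simp only [List.length_singleton] at hlen2
    have htlen : ((tauk k)^[2 * m] [1]).length = ((sigk k)^[m] [1]).length := by omega
    have hmpos : 1 ≤ 2 * m := by omega
    have hs' := hs m (by omega) (n + 1) (by omega)
    have ht' := ht (2 * m) hmpos n (by omega)
    rw [hs', ht']
    -- use the identity to relate the two getD's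
    have h1 : ((sigk k)^[m] [1] ++ [1]).getD (n + 1) 0 = ((sigk k)^[m] [1]).getD (n + 1) 0 :=
      List.getD_append _ _ _ _ (by omega)
    have h2 : ([1] ++ (tauk k)^[2 * m] [1]).getD (n + 1) 0 =
        ((tauk k)^[2 * m] [1]).getD n 0 := by
      simp [List.getD]
    rw [← h1, hid, h2]
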